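/- Let n ≥ 2 and let H = (h_{ij}) be a real symmetric n×n matrix. For any real constants k > n and c with trace(H) = c, the inequality Σ_{i,j} h_{ij}² ≥ (k/(k-1))·Σ_{j=1}^n h_{1j}² - c²/(k-n) holds. -/

import Mathlib

/-- **Hessian estimate (inequality (3.4)).** Let `n ≥ 2` and let `H` be a real
symmetric `n × n` matrix.  For any real constants `k > n` and `c` with
`trace H = c`, one has `∑_{i,j} h_{ij}² ≥ (k/(k-1)) ∑_j h_{1j}² - c²/(k-n)`,
where the second sum is over the first row of `H`. -/
theorem symmetric_matrix_frobenius_estimate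
    (n : ℕ) (hn : 2 ≤ n) (H : Matrix (Fin n) (Fin n) ℝ) (hH : H.IsSymm)
    (k c : ℝ) (hk : (n : ℝ) < k) (htr : Matrix.trace H = c) :
    ∑ i : Fin n, ∑ j : Fin n, (H i j) ^ 2 ≥
      k / (k - 1) * (∑ j : Fin n, (H ⟨0, by omega⟩ j) ^ 2) - c ^ 2 / (k - n) := by
  have hn' : (2:ℝ) ≤ (n:ℝ) := by exact_mod_cast hn
  set z : Fin n := ⟨0, by omega⟩ with hz
  set a : ℝ := H z z with ha
  set S : ℝ := ∑ i ∈ Finset.univ.erase z, (H z i) ^ 2 with hS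
  set T : ℝ := ∑ i ∈ Finset.univ.erase z, (H i i) ^ 2 with hT
  set d : ℝ := ∑ i ∈ Finset.univ.erase z, H i i with hd
  have hSnn : 0 ≤ S := Finset.sum_nonneg fun i _ => sq_nonneg _
  -- trace split
  have htr' : a + d = c := by
    rw [← htr, Matrix.trace]
    simp only [Matrix.diag]
    rw [ha, hd, ← Finset.add_sum_erase Finset.univ (fun i => H i i) (Finset.mem_univ z)]
  -- Cauchy-Schwarz on diagonal
  have hcard : (Finset.univ.erase z).card = n - 1 := by
    rw [Finset.card_erase_of_mem (Finset.mem_univ z), Finset.card_univ, Fintype.card_fin]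
  have hCS : d ^ 2 ≤ ((n:ℝ) - 1) * T := by
    have := sq_sum_le_card_mul_sum_sq (s := Finset.univ.erase z) (f := fun i => H i i)
    rw [hcard] at this
    have hcast : ((n - 1 : ℕ) : ℝ) = (n:ℝ) - 1 := by
      have : 1 ≤ n := by omega
      push_cast [this]; ring
    calc d ^ 2 ≤ ((n-1 : ℕ):ℝ) * T := this
      _ = ((n:ℝ) - 1) * T := by rw [hcast]
  -- row z decomposition
  have hrowz : ∑ j : Fin n, (H z j) ^ 2 = a ^ 2 + S := by
    rw [← Finset.add_sum_erase Finset.univ (fun j => (H z j)^2) (Finset.mem_univ z)]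
  -- lower bound on Frobenius norm
  have hrow : ∀ i ∈ Finset.univ.erase z, (H z i) ^ 2 + (H i i) ^ 2 ≤ ∑ j : Fin n, (H i j) ^ 2 := by
    intro i hi
    have hiz : i ≠ z := (Finset.mem_erase.mp hi).1
    have hsym : H i z = H z i := hH.apply z i
    have hsub : ({z, i} : Finset (Fin n)) ⊆ Finset.univ := Finset.subset_univ _
    have := Finset.sum_le_sum_of_subset_of_nonneg hsub
      (fun j _ _ => sq_nonneg (H i j))
    rw [Finset.sum_pair (Ne.symm hiz)] at this
    calc (H z i) ^ 2 + (H i i) ^ 2 = (H i z) ^ 2 + (H i i) ^ 2 := by rw [hsym]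
      _ ≤ ∑ j : Fin n, (H i j) ^ 2 := this
  have hF : a ^ 2 + 2 * S + T ≤ ∑ i : Fin n, ∑ j : Fin n, (H i j) ^ 2 := by
    rw [← Finset.add_sum_erase Finset.univ (fun i => ∑ j : Fin n, (H i j)^2)
      (Finset.mem_univ z), hrowz]
    have : S + T ≤ ∑ i ∈ Finset.univ.erase z, ∑ j : Fin n, (H i j) ^ 2 := by
      rw [hS, hT, ← Finset.sum_add_distrib]
      exact Finset.sum_le_sum hrow
    linarith
  -- final algebra
  rw [hrowz]
  have hk1 : (0:ℝ) < k - 1 := by linarith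
  have hkn : (0:ℝ) < k - (n:ℝ) := by linarith
  rw [ge_iff_le, div_mul_eq_mul_div, div_sub_div _ _ (ne_of_gt hk1) (ne_of_gt hkn),
    div_le_iff₀ (by positivity)]
  have hda : d = c - a := by linarith
  rw [hda] at hCS
  have hkey : a ^ 2 * (k - n) ≤ T * ((k - 1) * (k - n)) + (k - 1) * c ^ 2 := by
    have hpos : (0:ℝ) < (n:ℝ) - 1 := by linarith
    rw [← mul_le_mul_iff_right₀ hpos]
    nlinarith [sq_nonneg ((k - n) * (a - c) - ((n:ℝ) - 1) * c),
      mul_le_mul_of_nonneg_left hCS (mul_pos hk1 hkn).le]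
  nlinarith [hkey, hF, mul_pos hk1 hkn,
    mul_le_mul_of_nonneg_left hF (mul_pos hk1 hkn).le,
    mul_nonneg (mul_nonneg (show (0:ℝ) ≤ k - 2 by linarith) hkn.le) hSnn]
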